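/- With ε_S = ε̄₀∏_{i∈S}ε̄ᵢ as above (ε̄₀,...,ε̄_n mutually independent Rademacher, N = 2^n), almost surely either all ε_S equal 1, or all equal −1, or exactly half of them equal 1; and P(all ε_S = 1) = P(all ε_S = −1) = 1/2^{n+1} = 1/(2N). Consequently, for all p ≥ 2, E|∑_{S⊆{1,...,n}} ε_S|^p = N^{p−1} and C(N,p,2) = N^{1/2−1/p} for N = 2^n. -/

import Mathlib

open MeasureTheory ENNReal

noncomputable section

/-- A family `ε` of ±1-valued (Rademacher) random variables which is `k`-wise independent:
every collection of at most `k` coordinates takes any prescribed pattern of signs with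
probability `(1/2)^(number of coordinates)`. -/
def IsKWiseRademacher {Ω : Type*} [MeasurableSpace Ω] (μ : Measure Ω)
    {ι : Type*} [DecidableEq ι] (k : ℕ) (ε : ι → Ω → ℝ) : Prop :=
  (∀ i, Measurable (ε i)) ∧
  ∀ s : Finset ι, s.card ≤ k → ∀ σ : ι → ℝ, (∀ i, σ i = 1 ∨ σ i = -1) →
    μ {ω | ∀ i ∈ s, ε i ω = σ i} = (2 : ℝ≥0∞)⁻¹ ^ s.card

/-- `CNpk N p k` : the best constant in the upper Khintchine inequality with exponent `p`
over all `k`-wise independent Rademacher vectors of length `N` and unit vectors `a`. -/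
def CNpk (N : ℕ) (p : ℝ) (k : ℕ) : ℝ :=
  sSup {x : ℝ | ∃ (Ω : Type) (_ : MeasurableSpace Ω) (μ : Measure Ω),
    IsProbabilityMeasure μ ∧ ∃ (ε : Fin N → Ω → ℝ) (a : Fin N → ℝ),
      IsKWiseRademacher μ k ε ∧ (∑ i, (a i) ^ 2 = 1) ∧
      x = (∫ ω, |∑ i, a i * ε i ω| ^ p ∂μ) ^ (1 / p)}

section Aux
open Finset
set_option linter.unusedSectionVars false
namespace PFM


def sgn (b : Bool) : ℝ := if b then 1 else -1

lemma sgn_mem (b : Bool) : sgn b = 1 ∨ sgn b = -1 := by cases b <;> simp [sgn]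

lemma sgn_inj : Function.Injective sgn := by
  intro a b hab; cases a <;> cases b <;> simp [sgn] at hab ⊢ <;> norm_num at hab

def par {m : ℕ} (A : Finset (Fin m)) (σ : Fin m → Bool) : ℝ := ∏ j ∈ A, sgn (σ j)

lemma par_mem {m : ℕ} (A : Finset (Fin m)) (σ : Fin m → Bool) : par A σ = 1 ∨ par A σ = -1 := by
  classical
  refine Finset.prod_induction _ (fun x => x = 1 ∨ x = -1) ?_ (by left; rfl) ?_
  · rintro x y (h1 | h1) (h2 | h2) <;> simp [h1, h2]
  · intro j _; exact sgn_mem (σ j)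

def flip {m : ℕ} (j : Fin m) (σ : Fin m → Bool) : Fin m → Bool := Function.update σ j (!σ j)

lemma flip_flip {m : ℕ} (j : Fin m) (σ : Fin m → Bool) : flip j (flip j σ) = σ := by
  funext k
  by_cases hk : k = j
  · subst hk; simp [flip]
  · simp [flip, Function.update_of_ne hk]

lemma par_flip_mem {m : ℕ} {A : Finset (Fin m)} {j : Fin m} (hj : j ∈ A) (σ : Fin m → Bool) :
    par A (flip j σ) = - par A σ := by
  classical
  unfold par
  rw [← Finset.prod_erase_mul _ _ hj, ← Finset.prod_erase_mul _ _ hj]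
  have h1 : ∀ k ∈ A.erase j, sgn ((flip j σ) k) = sgn (σ k) := by
    intro k hk
    have : k ≠ j := Finset.ne_of_mem_erase hk
    simp [flip, Function.update_of_ne this]
  rw [Finset.prod_congr rfl h1]
  have : sgn ((flip j σ) j) = - sgn (σ j) := by
    simp only [flip, Function.update_self]; cases σ j <;> simp [sgn]
  rw [this]; ring

lemma par_flip_not_mem {m : ℕ} {A : Finset (Fin m)} {j : Fin m} (hj : j ∉ A) (σ : Fin m → Bool) :
    par A (flip j σ) = par A σ := by
  classical
  unfold par
  refine Finset.prod_congr rfl fun k hk => ?_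
  have : k ≠ j := fun h => hj (h ▸ hk)
  simp [flip, Function.update_of_ne this]

/-- flip-pairing: if `p` is invariant and `q` anti-invariant under a flip, `p∧q` has half the
count of `p`. -/
lemma card_half {m : ℕ} (j : Fin m) (p q : (Fin m → Bool) → Prop)
    [DecidablePred p] [DecidablePred q]
    (hp : ∀ σ, p (flip j σ) ↔ p σ) (hq : ∀ σ, q (flip j σ) ↔ ¬ q σ) :
    2 * (univ.filter (fun σ => p σ ∧ q σ)).card = (univ.filter p).card := by
  classical
  have hsplit := Finset.card_filter_add_card_filter_not
    (s := univ.filter p) (p := q)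
  have hbij : (Finset.filter q (univ.filter p)).card
      = (Finset.filter (fun σ => ¬ q σ) (univ.filter p)).card := by
    refine Finset.card_bij' (fun σ _ => flip j σ) (fun σ _ => flip j σ) ?_ ?_ ?_ ?_
    · intro σ hσ
      simp only [Finset.mem_filter, Finset.mem_univ, true_and] at hσ ⊢
      exact ⟨(hp σ).mpr hσ.1, fun hc => ((hq σ).mp hc) hσ.2⟩
    · intro σ hσ
      simp only [Finset.mem_filter, Finset.mem_univ, true_and] at hσ ⊢
      exact ⟨(hp σ).mpr hσ.1, (hq σ).mpr hσ.2⟩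
    · intro σ _; exact flip_flip j σ
    · intro σ _; exact flip_flip j σ
  have heq : univ.filter (fun σ => p σ ∧ q σ) = Finset.filter q (univ.filter p) := by
    ext σ; simp [Finset.mem_filter, and_comm]
  rw [heq]; omega

lemma card_univ_bool (m : ℕ) : (univ : Finset (Fin m → Bool)).card = 2 ^ m := by
  simp [Finset.card_univ]

lemma par_flip_iff {m : ℕ} {A : Finset (Fin m)} {j : Fin m} (hj : j ∈ A) {v : ℝ}
    (hv : v = 1 ∨ v = -1) (σ : Fin m → Bool) :
    par A (flip j σ) = v ↔ ¬ (par A σ = v) := by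
  rw [par_flip_mem hj]
  rcases par_mem A σ with h | h <;> rcases hv with rfl | rfl <;> rw [h] <;> norm_num

lemma card_par_eq {m : ℕ} {A : Finset (Fin m)} (hA : A.Nonempty) {v : ℝ}
    (hv : v = 1 ∨ v = -1) :
    2 * (univ.filter (fun σ => par A σ = v)).card = 2 ^ m := by
  classical
  obtain ⟨j, hj⟩ := hA
  have := card_half j (fun _ => True) (fun σ => par A σ = v) (fun σ => Iff.rfl)
    (fun σ => par_flip_iff hj hv σ)
  simpa [Finset.filter_true, card_univ_bool] using this

lemma card_par_pair {m : ℕ} {A B : Finset (Fin m)} {j : Fin m} (hjA : j ∈ A) (hjB : j ∉ B)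
    (hB : B.Nonempty) {v w : ℝ} (hv : v = 1 ∨ v = -1) (hw : w = 1 ∨ w = -1) :
    4 * (univ.filter (fun σ => par B σ = w ∧ par A σ = v)).card = 2 ^ m := by
  classical
  have h1 := card_half j (fun σ => par B σ = w) (fun σ => par A σ = v)
    (fun σ => by show par B (flip j σ) = w ↔ par B σ = w; rw [par_flip_not_mem hjB]) (fun σ => par_flip_iff hjA hv σ)
  have h2 : 2 * (univ.filter (fun σ => par B σ = w)).card = 2 ^ m := card_par_eq hB hw
  have h1' : 2 * (univ.filter (fun σ => par B σ = w ∧ par A σ = v)).card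
      = (univ.filter (fun σ => par B σ = w)).card := h1
  omega


variable {Ω : Type*} [MeasurableSpace Ω] (μ : Measure Ω) [IsProbabilityMeasure μ] {n : ℕ}
  {εbar : Fin (n + 1) → Ω → ℝ}

def Ev (εbar : Fin (n + 1) → Ω → ℝ) (σ : Fin (n + 1) → Bool) : Set Ω :=
  {ω | ∀ j, εbar j ω = sgn (σ j)}

lemma measurable_Ev (hm : ∀ j, Measurable (εbar j)) (σ : Fin (n + 1) → Bool) :
    MeasurableSet (Ev εbar σ) := by
  have : Ev εbar σ = ⋂ j, (εbar j) ⁻¹' {sgn (σ j)} := by ext ω; simp [Ev]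
  rw [this]; exact MeasurableSet.iInter fun j => (hm j) (measurableSet_singleton _)

lemma measure_Ev (h : IsKWiseRademacher μ (n + 1) εbar) (σ : Fin (n + 1) → Bool) :
    μ (Ev εbar σ) = (2 : ℝ≥0∞)⁻¹ ^ (n + 1) := by
  classical
  have := h.2 Finset.univ (by simp) (fun j => sgn (σ j)) (fun j => sgn_mem _)
  simp only [Finset.mem_univ, Finset.card_univ, Fintype.card_fin, true_implies] at this
  exact this

lemma Ev_disjoint {σ τ : Fin (n + 1) → Bool} (hστ : σ ≠ τ) :
    Disjoint (Ev εbar σ) (Ev εbar τ) := by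
  obtain ⟨j, hj⟩ := Function.ne_iff.mp hστ
  rw [Set.disjoint_left]
  intro ω h1 h2
  exact hj (sgn_inj ((h1 j).symm.trans (h2 j)))

lemma measure_iUnion_Ev (h : IsKWiseRademacher μ (n + 1) εbar) :
    μ (⋃ σ, Ev εbar σ) = 1 := by
  classical
  rw [measure_iUnion (fun σ τ hστ => Ev_disjoint hστ) (fun σ => measurable_Ev h.1 σ)]
  rw [tsum_fintype]
  simp only [measure_Ev μ h]
  rw [Finset.sum_const, Finset.card_univ, Fintype.card_fun, Fintype.card_bool,
    Fintype.card_fin, nsmul_eq_mul]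
  rw [Nat.cast_pow, Nat.cast_ofNat, ← mul_pow, ENNReal.mul_inv_cancel two_ne_zero ENNReal.ofNat_ne_top,
    one_pow]

lemma ae_exists_Ev (h : IsKWiseRademacher μ (n + 1) εbar) :
    ∀ᵐ ω ∂μ, ∃ σ, ω ∈ Ev εbar σ := by
  have hc : μ (⋃ σ, Ev εbar σ)ᶜ = 0 := by
    rw [measure_compl (MeasurableSet.iUnion fun σ => measurable_Ev h.1 σ) (measure_ne_top μ _),
      measure_iUnion_Ev μ h, measure_univ, tsub_self]
  filter_upwards [measure_eq_zero_iff_ae_notMem.mp hc] with ω hω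
  simpa [Set.mem_iUnion] using hω

lemma measure_eq_count (h : IsKWiseRademacher μ (n + 1) εbar) {A : Set Ω}
    (hA : MeasurableSet A) (P : Finset (Fin (n + 1) → Bool))
    (hin : ∀ σ ∈ P, Ev εbar σ ⊆ A) (hout : ∀ σ ∉ P, Disjoint (Ev εbar σ) A) :
    μ A = P.card * (2 : ℝ≥0∞)⁻¹ ^ (n + 1) := by
  classical
  have hU : μ (⋃ σ ∈ P, Ev εbar σ) = P.card * (2 : ℝ≥0∞)⁻¹ ^ (n + 1) := by
    rw [measure_biUnion_finset (fun σ _ τ _ hστ => Ev_disjoint hστ)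
      (fun σ _ => measurable_Ev h.1 σ)]
    simp only [measure_Ev μ h, Finset.sum_const, nsmul_eq_mul]
  have hle1 : μ (⋃ σ ∈ P, Ev εbar σ) ≤ μ A := measure_mono (Set.iUnion₂_subset hin)
  have hsub : A ⊆ (⋃ σ ∈ P, Ev εbar σ) ∪ (⋃ σ, Ev εbar σ)ᶜ := by
    intro ω hω
    by_cases hex : ∃ σ, ω ∈ Ev εbar σ
    · obtain ⟨σ, hσ⟩ := hex
      by_cases hP : σ ∈ P
      · exact Or.inl (Set.mem_biUnion hP hσ)
      · exact absurd hω (Set.disjoint_left.mp (hout σ hP) hσ)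
    · exact Or.inr (by simpa [Set.mem_iUnion] using hex)
  have hc : μ (⋃ σ, Ev εbar σ)ᶜ = 0 := by
    rw [measure_compl (MeasurableSet.iUnion fun σ => measurable_Ev h.1 σ) (measure_ne_top μ _),
      measure_iUnion_Ev μ h, measure_univ, tsub_self]
  have hle2 : μ A ≤ μ (⋃ σ ∈ P, Ev εbar σ) := by
    calc μ A ≤ μ ((⋃ σ ∈ P, Ev εbar σ) ∪ (⋃ σ, Ev εbar σ)ᶜ) := measure_mono hsub
    _ ≤ μ (⋃ σ ∈ P, Ev εbar σ) + μ (⋃ σ, Ev εbar σ)ᶜ := measure_union_le _ _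
    _ = μ (⋃ σ ∈ P, Ev εbar σ) := by rw [hc, add_zero]
  rw [← hU]; exact le_antisymm hle2 hle1

end PFM

namespace PFM2
open PFM
variable {Ω : Type*} [MeasurableSpace Ω] (μ : Measure Ω) [IsProbabilityMeasure μ] {n : ℕ}
  {εbar : Fin (n + 1) → Ω → ℝ} {f : Finset (Fin n) → Ω → ℝ}

def Aset (S : Finset (Fin n)) : Finset (Fin (n + 1)) := insert 0 (S.image Fin.succ)

lemma zero_not_mem_image (S : Finset (Fin n)) : (0 : Fin (n + 1)) ∉ S.image Fin.succ := by
  simp [Fin.succ_ne_zero]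

lemma Aset_nonempty (S : Finset (Fin n)) : (Aset S).Nonempty := ⟨0, Finset.mem_insert_self _ _⟩

lemma Aset_inj : Function.Injective (Aset (n := n)) := by
  intro S T hST
  have h2 : (Aset S).erase 0 = (Aset T).erase 0 := by rw [hST]
  rw [Aset, Aset, Finset.erase_insert (zero_not_mem_image S),
    Finset.erase_insert (zero_not_mem_image T)] at h2
  exact Finset.image_injective (Fin.succ_injective n) h2

lemma par_Aset (S : Finset (Fin n)) (σ : Fin (n + 1) → Bool) :
    par (Aset S) σ = sgn (σ 0) * ∏ i ∈ S, sgn (σ i.succ) := by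
  rw [par, Aset, Finset.prod_insert (zero_not_mem_image S),
    Finset.prod_image (fun i _ j _ h => Fin.succ_injective n h)]

lemma f_on_Ev (hf : ∀ S ω, f S ω = εbar 0 ω * ∏ i ∈ S, εbar i.succ ω)
    {σ : Fin (n + 1) → Bool} {ω : Ω} (hω : ω ∈ Ev εbar σ) (S : Finset (Fin n)) :
    f S ω = par (Aset S) σ := by
  rw [hf, par_Aset, hω 0]
  exact congrArg _ (Finset.prod_congr rfl fun i _ => hω i.succ)

lemma trich (hf : ∀ S ω, f S ω = εbar 0 ω * ∏ i ∈ S, εbar i.succ ω)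
    {σ : Fin (n + 1) → Bool} {ω : Ω} (hω : ω ∈ Ev εbar σ) :
    (∀ S : Finset (Fin n), f S ω = 1) ∨ (∀ S : Finset (Fin n), f S ω = -1) ∨
      2 * (Finset.univ.filter (fun S : Finset (Fin n) => f S ω = 1)).card = 2 ^ n := by
  classical
  by_cases hall : ∀ i : Fin n, σ i.succ = true
  · have hval : ∀ S : Finset (Fin n), f S ω = sgn (σ 0) := by
      intro S
      rw [f_on_Ev hf hω, par_Aset, Finset.prod_eq_one fun i _ => by rw [hall i]; rfl, mul_one]
    cases hb : σ 0
    · exact Or.inr (Or.inl fun S => by rw [hval S, hb]; rfl)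
    · exact Or.inl fun S => by rw [hval S, hb]; rfl
  · push_neg at hall
    obtain ⟨i, hi⟩ := hall
    have hifalse : σ i.succ = false := by simpa using hi
    refine Or.inr (Or.inr ?_)
    set g : Finset (Fin n) → Finset (Fin n) :=
      fun S => if i ∈ S then S.erase i else insert i S with hg
    have hneg : ∀ S, f (g S) ω = - f S ω := by
      intro S
      rw [f_on_Ev hf hω, f_on_Ev hf hω, par_Aset, par_Aset]
      by_cases hiS : i ∈ S
      · have hkey : (∏ x ∈ S.erase i, sgn (σ x.succ)) * sgn (σ i.succ)
            = ∏ x ∈ S, sgn (σ x.succ) := Finset.prod_erase_mul S _ hiS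
        rw [hifalse, show sgn false = -1 from rfl] at hkey
        simp only [hg, if_pos hiS]
        rw [← hkey]; ring
      · simp only [hg, if_neg hiS]
        rw [Finset.prod_insert hiS, hifalse, show sgn false = -1 from rfl]
        ring
    have hgg : ∀ S, g (g S) = S := by
      intro S
      by_cases hiS : i ∈ S
      · simp only [hg, if_pos hiS, if_neg (Finset.notMem_erase i S)]
        exact Finset.insert_erase hiS
      · simp only [hg, if_neg hiS, if_pos (Finset.mem_insert_self i S)]
        exact Finset.erase_insert hiS
    have hpm : ∀ S : Finset (Fin n), f S ω = 1 ∨ f S ω = -1 :=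
      fun S => by rw [f_on_Ev hf hω]; exact par_mem _ _
    have hcards : (Finset.univ.filter (fun S : Finset (Fin n) => f S ω = 1)).card
        = (Finset.univ.filter (fun S : Finset (Fin n) => f S ω = -1)).card := by
      refine Finset.card_bij' (fun S _ => g S) (fun S _ => g S) ?_ ?_ ?_ ?_
      · intro S hS
        simp only [Finset.mem_filter, Finset.mem_univ, true_and] at hS ⊢
        rw [hneg S, hS]
      · intro S hS
        simp only [Finset.mem_filter, Finset.mem_univ, true_and] at hS ⊢
        rw [hneg S, hS]; norm_num
      · intro S _; exact hgg S
      · intro S _; exact hgg S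
    have hsplit := Finset.card_filter_add_card_filter_not
      (s := (Finset.univ : Finset (Finset (Fin n)))) (p := fun S => f S ω = 1)
    have hcongr : (Finset.univ.filter (fun S : Finset (Fin n) => ¬ f S ω = 1)).card
        = (Finset.univ.filter (fun S : Finset (Fin n) => f S ω = -1)).card := by
      refine congrArg _ (Finset.filter_congr fun S _ => ?_)
      rcases hpm S with h1 | h1 <;> simp [h1] <;> norm_num
    have hcard_univ : (Finset.univ : Finset (Finset (Fin n))).card = 2 ^ n := by
      simp [Finset.card_univ]
    omega

lemma sgn_eq_one_iff {b : Bool} : sgn b = 1 ↔ b = true := by cases b <;> simp [sgn] <;> norm_num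

lemma sgn_eq_neg_one_iff {b : Bool} : sgn b = -1 ↔ b = false := by
  cases b <;> simp [sgn] <;> norm_num

lemma measurable_f (h : IsKWiseRademacher μ (n + 1) εbar)
    (hf : ∀ S ω, f S ω = εbar 0 ω * ∏ i ∈ S, εbar i.succ ω) (S : Finset (Fin n)) :
    Measurable (f S) := by
  have : f S = fun ω => εbar 0 ω * ∏ i ∈ S, εbar i.succ ω := funext (hf S)
  rw [this]
  exact (h.1 0).mul (Finset.measurable_prod S fun i _ => h.1 i.succ)

def A1 (f : Finset (Fin n) → Ω → ℝ) : Set Ω := {ω | ∀ S : Finset (Fin n), f S ω = 1}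
def A2 (f : Finset (Fin n) → Ω → ℝ) : Set Ω := {ω | ∀ S : Finset (Fin n), f S ω = -1}

lemma measurableSet_A1 (h : IsKWiseRademacher μ (n + 1) εbar)
    (hf : ∀ S ω, f S ω = εbar 0 ω * ∏ i ∈ S, εbar i.succ ω) : MeasurableSet (A1 f) := by
  have : A1 f = ⋂ S : Finset (Fin n), (f S) ⁻¹' {1} := by ext ω; simp [A1]
  rw [this]
  exact MeasurableSet.iInter fun S => (measurable_f μ h hf S) (measurableSet_singleton _)

lemma measurableSet_A2 (h : IsKWiseRademacher μ (n + 1) εbar)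
    (hf : ∀ S ω, f S ω = εbar 0 ω * ∏ i ∈ S, εbar i.succ ω) : MeasurableSet (A2 f) := by
  have : A2 f = ⋂ S : Finset (Fin n), (f S) ⁻¹' {-1} := by ext ω; simp [A2]
  rw [this]
  exact MeasurableSet.iInter fun S => (measurable_f μ h hf S) (measurableSet_singleton _)

lemma measure_A1 (h : IsKWiseRademacher μ (n + 1) εbar)
    (hf : ∀ S ω, f S ω = εbar 0 ω * ∏ i ∈ S, εbar i.succ ω) :
    μ (A1 f) = (2 : ℝ≥0∞)⁻¹ ^ (n + 1) := by
  classical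
  have := measure_eq_count μ h (measurableSet_A1 μ h hf) {fun _ => true} ?hin ?hout
  · simpa using this
  case hin =>
    intro σ hσ ω hω S
    rw [Finset.mem_singleton] at hσ
    subst hσ
    rw [f_on_Ev hf hω, par_Aset]
    simp [sgn]
  case hout =>
    intro σ hσ
    rw [Set.disjoint_left]
    intro ω hωE hωA
    apply hσ
    rw [Finset.mem_singleton]
    have h0 : σ 0 = true := by
      have := hωA (∅ : Finset (Fin n))
      rw [f_on_Ev hf hωE, par_Aset, Finset.prod_empty, mul_one] at this
      exact sgn_eq_one_iff.mp this
    have hs : ∀ i : Fin n, σ i.succ = true := by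
      intro i
      have := hωA ({i} : Finset (Fin n))
      rw [f_on_Ev hf hωE, par_Aset, Finset.prod_singleton, sgn_eq_one_iff.mpr h0, one_mul] at this
      exact sgn_eq_one_iff.mp this
    exact funext (Fin.cases h0 hs)

lemma measure_A2 (h : IsKWiseRademacher μ (n + 1) εbar)
    (hf : ∀ S ω, f S ω = εbar 0 ω * ∏ i ∈ S, εbar i.succ ω) :
    μ (A2 f) = (2 : ℝ≥0∞)⁻¹ ^ (n + 1) := by
  classical
  have := measure_eq_count μ h (measurableSet_A2 μ h hf)
    {fun j => !(decide (j = 0))} ?hin ?hout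
  · simpa using this
  case hin =>
    intro σ hσ ω hω S
    rw [Finset.mem_singleton] at hσ
    subst hσ
    rw [f_on_Ev hf hω, par_Aset]
    have h1 : ∀ i ∈ S, sgn (!(decide ((i : Fin n).succ = (0 : Fin (n+1))))) = 1 := by
      intro i _
      rw [decide_eq_false (Fin.succ_ne_zero i)]
      rfl
    rw [Finset.prod_congr rfl h1, Finset.prod_const_one, mul_one]
    simp [sgn]
  case hout =>
    intro σ hσ
    rw [Set.disjoint_left]
    intro ω hωE hωA
    apply hσ
    rw [Finset.mem_singleton]
    have h0 : σ 0 = false := by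
      have := hωA (∅ : Finset (Fin n))
      rw [f_on_Ev hf hωE, par_Aset, Finset.prod_empty, mul_one] at this
      exact sgn_eq_neg_one_iff.mp this
    have hs : ∀ i : Fin n, σ i.succ = true := by
      intro i
      have := hωA ({i} : Finset (Fin n))
      rw [f_on_Ev hf hωE, par_Aset, Finset.prod_singleton, sgn_eq_neg_one_iff.mpr h0] at this
      have h2 : sgn (σ i.succ) = 1 := by linarith
      exact sgn_eq_one_iff.mp h2
    funext j
    refine Fin.cases ?_ ?_ j
    · simp [h0]
    · intro i
      rw [hs i, decide_eq_false (Fin.succ_ne_zero i)]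
      rfl

lemma sum_f_zero (hf : ∀ S ω, f S ω = εbar 0 ω * ∏ i ∈ S, εbar i.succ ω)
    {σ : Fin (n + 1) → Bool} {ω : Ω} (hω : ω ∈ Ev εbar σ) {i : Fin n}
    (hifalse : σ i.succ = false) :
    ∑ S : Finset (Fin n), f S ω = 0 := by
  classical
  set g : Finset (Fin n) → Finset (Fin n) :=
    fun S => if i ∈ S then S.erase i else insert i S with hg
  have hneg : ∀ S, f (g S) ω = - f S ω := by
    intro S
    rw [f_on_Ev hf hω, f_on_Ev hf hω, par_Aset, par_Aset]
    by_cases hiS : i ∈ S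
    · have hkey : (∏ x ∈ S.erase i, sgn (σ x.succ)) * sgn (σ i.succ)
          = ∏ x ∈ S, sgn (σ x.succ) := Finset.prod_erase_mul S _ hiS
      rw [hifalse, show sgn false = -1 from rfl] at hkey
      simp only [hg, if_pos hiS]
      rw [← hkey]; ring
    · simp only [hg, if_neg hiS]
      rw [Finset.prod_insert hiS, hifalse, show sgn false = -1 from rfl]
      ring
  have hgg : Function.Involutive g := by
    intro S
    by_cases hiS : i ∈ S
    · simp only [hg, if_pos hiS, if_neg (Finset.notMem_erase i S)]
      exact Finset.insert_erase hiS
    · simp only [hg, if_neg hiS, if_pos (Finset.mem_insert_self i S)]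
      exact Finset.erase_insert hiS
  have hsum : ∑ S : Finset (Fin n), f (g S) ω = ∑ S : Finset (Fin n), f S ω :=
    Equiv.sum_comp hgg.toPerm (fun S => f S ω)
  have hsum2 : ∑ S : Finset (Fin n), f (g S) ω = - ∑ S : Finset (Fin n), f S ω := by
    rw [Finset.sum_congr rfl fun S _ => hneg S, Finset.sum_neg_distrib]
  linarith [hsum, hsum2]

lemma abs_sum_rpow (hf : ∀ S ω, f S ω = εbar 0 ω * ∏ i ∈ S, εbar i.succ ω)
    {p : ℝ} (hp : 0 < p) {σ : Fin (n + 1) → Bool} {ω : Ω} (hω : ω ∈ Ev εbar σ) :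
    |∑ S : Finset (Fin n), f S ω| ^ p
      = Set.indicator (A1 f ∪ A2 f) (fun _ => ((2 ^ n : ℕ) : ℝ) ^ p) ω := by
  classical
  by_cases hall : ∀ i : Fin n, σ i.succ = true
  · have hval : ∀ S : Finset (Fin n), f S ω = sgn (σ 0) := by
      intro S
      rw [f_on_Ev hf hω, par_Aset, Finset.prod_eq_one fun i _ => by rw [hall i]; rfl, mul_one]
    have hsum : ∑ S : Finset (Fin n), f S ω = (2 ^ n : ℕ) * sgn (σ 0) := by
      rw [Finset.sum_congr rfl fun S _ => hval S, Finset.sum_const, Finset.card_univ,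
        nsmul_eq_mul]
      congr 1
      simp
    have hmem : ω ∈ A1 f ∪ A2 f := by
      cases hb : σ 0
      · exact Or.inr fun S => by rw [hval S, hb]; rfl
      · exact Or.inl fun S => by rw [hval S, hb]; rfl
    rw [Set.indicator_of_mem hmem, hsum]
    rcases sgn_mem (σ 0) with hb | hb <;> rw [hb]
    · rw [mul_one, abs_of_nonneg (by positivity)]
    · rw [mul_neg_one, abs_neg, abs_of_nonneg (by positivity)]
  · push_neg at hall
    obtain ⟨i, hi⟩ := hall
    have hifalse : σ i.succ = false := by simpa using hi
    have hnmem : ω ∉ A1 f ∪ A2 f := by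
      have h0 : f ∅ ω = sgn (σ 0) := by
        rw [f_on_Ev hf hω, par_Aset, Finset.prod_empty, mul_one]
      have h1 : f {i} ω = sgn (σ 0) * (-1) := by
        rw [f_on_Ev hf hω, par_Aset, Finset.prod_singleton, hifalse]
        rfl
      rintro (hA | hA)
      · have e0 := hA ∅
        have e1 := hA {i}
        rw [h0] at e0; rw [h1, e0] at e1; norm_num at e1
      · have e0 := hA ∅
        have e1 := hA {i}
        rw [h0] at e0; rw [h1, e0] at e1; norm_num at e1
    rw [Set.indicator_of_notMem hnmem, sum_f_zero hf hω hifalse, abs_zero,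
      Real.zero_rpow (ne_of_gt hp)]

lemma integral_abs_sum (h : IsKWiseRademacher μ (n + 1) εbar)
    (hf : ∀ S ω, f S ω = εbar 0 ω * ∏ i ∈ S, εbar i.succ ω) {p : ℝ} (hp : 0 < p) :
    ∫ ω, |∑ S : Finset (Fin n), f S ω| ^ p ∂μ = ((2 ^ n : ℕ) : ℝ) ^ (p - 1) := by
  classical
  have hae : (fun ω => |∑ S : Finset (Fin n), f S ω| ^ p)
      =ᵐ[μ] Set.indicator (A1 f ∪ A2 f) (fun _ => ((2 ^ n : ℕ) : ℝ) ^ p) := by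
    filter_upwards [ae_exists_Ev μ h] with ω hω
    obtain ⟨σ, hσ⟩ := hω
    exact abs_sum_rpow hf hp hσ
  rw [integral_congr_ae hae,
    integral_indicator_const _ ((measurableSet_A1 μ h hf).union (measurableSet_A2 μ h hf))]
  have hdisj : Disjoint (A1 f) (A2 f) := by
    rw [Set.disjoint_left]
    intro ω h1 h2
    have := (h1 ∅).symm.trans (h2 ∅)
    norm_num at this
  have hμ : μ (A1 f ∪ A2 f) = (2 : ℝ≥0∞)⁻¹ ^ n := by
    rw [measure_union hdisj (measurableSet_A2 μ h hf), measure_A1 μ h hf, measure_A2 μ h hf,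
      pow_succ, ← mul_add, ENNReal.inv_two_add_inv_two, mul_one]
  rw [measureReal_def, hμ]
  have htr : ((2 : ℝ≥0∞)⁻¹ ^ n).toReal = ((2 : ℝ) ^ n)⁻¹ := by
    rw [ENNReal.toReal_pow, ENNReal.toReal_inv]
    simp [inv_pow]
  rw [htr, smul_eq_mul]
  have hX : (0 : ℝ) < ((2 ^ n : ℕ) : ℝ) := by positivity
  rw [Real.rpow_sub hX, Real.rpow_one]
  rw [show ((2 ^ n : ℕ) : ℝ) = (2 : ℝ) ^ n by push_cast; ring]
  field_simp

section Upper
variable {Ω' : Type*} [MeasurableSpace Ω'] (ν : Measure Ω') [IsProbabilityMeasure ν] {N : ℕ}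

lemma ae_pm (ε : Fin N → Ω' → ℝ) (hε : IsKWiseRademacher ν 2 ε) :
    ∀ᵐ ω ∂ν, ∀ i, ε i ω = 1 ∨ ε i ω = -1 := by
  rw [MeasureTheory.ae_all_iff]
  intro i
  have h1 : ν {ω | ε i ω = 1} = 2⁻¹ := by
    have := hε.2 {i} (by simp) (fun _ => 1) (fun _ => Or.inl rfl)
    simpa using this
  have h2 : ν {ω | ε i ω = -1} = 2⁻¹ := by
    have := hε.2 {i} (by simp) (fun _ => -1) (fun _ => Or.inr rfl)
    simpa using this
  have hm1 : MeasurableSet {ω | ε i ω = 1} := hε.1 i (measurableSet_singleton 1)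
  have hm2 : MeasurableSet {ω | ε i ω = -1} := hε.1 i (measurableSet_singleton (-1))
  have hdisj : Disjoint {ω | ε i ω = 1} {ω | ε i ω = -1} := by
    rw [Set.disjoint_left]
    intro ω hω1 hω2
    rw [Set.mem_setOf_eq] at hω1 hω2
    rw [hω1] at hω2; norm_num at hω2
  have hU : ν ({ω | ε i ω = 1} ∪ {ω | ε i ω = -1}) = 1 := by
    rw [measure_union hdisj hm2, h1, h2, ENNReal.inv_two_add_inv_two]
  have hc : ν ({ω | ε i ω = 1} ∪ {ω | ε i ω = -1})ᶜ = 0 := by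
    rw [measure_compl (hm1.union hm2) (measure_ne_top ν _), hU, measure_univ, tsub_self]
  filter_upwards [measure_eq_zero_iff_ae_notMem.mp hc] with ω hω
  simpa [Set.mem_union, Set.mem_setOf_eq] using not_not.mp (fun hcon => hω hcon)

lemma integral_eps_mul (ε : Fin N → Ω' → ℝ) (hε : IsKWiseRademacher ν 2 ε)
    {i j : Fin N} (hij : i ≠ j) : ∫ ω, ε i ω * ε j ω ∂ν = 0 := by
  classical
  set G : Set Ω' := {ω | ε i ω * ε j ω = 1} with hGdef
  set H : Set Ω' := {ω | ε i ω * ε j ω = -1} with hHdef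
  have hmG : MeasurableSet G := ((hε.1 i).mul (hε.1 j)) (measurableSet_singleton 1)
  have hmH : MeasurableSet H := ((hε.1 i).mul (hε.1 j)) (measurableSet_singleton (-1))
  have hF : ∀ s t : ℝ, (s = 1 ∨ s = -1) → (t = 1 ∨ t = -1) →
      ν {ω | ε i ω = s ∧ ε j ω = t} = 2⁻¹ ^ 2 := by
    intro s t hs ht
    have hcard : ({i, j} : Finset (Fin N)).card = 2 := Finset.card_pair hij
    have := hε.2 {i, j} (le_of_eq hcard) (fun k => if k = i then s else t)
      (fun k => by by_cases hk : k = i <;> simp [hk, hs, ht])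
    rw [hcard] at this
    rw [← this]
    congr 1
    ext ω
    simp only [Set.mem_setOf_eq, Finset.mem_insert, Finset.mem_singleton]
    constructor
    · rintro ⟨h1, h2⟩ k hk
      rcases hk with rfl | rfl
      · simpa using h1
      · simp [if_neg (Ne.symm hij), h2]
    · intro hk
      refine ⟨by simpa using hk i (Or.inl rfl), ?_⟩
      have := hk j (Or.inr rfl)
      simpa [if_neg (Ne.symm hij)] using this
  have hdisjF : ∀ t : ℝ, Disjoint {ω | ε i ω = 1 ∧ ε j ω = t} {ω | ε i ω = -1 ∧ ε j ω = t} := by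
    intro t
    rw [Set.disjoint_left]
    rintro ω ⟨h1, _⟩ ⟨h2, _⟩
    rw [h1] at h2; norm_num at h2
  have hmF : ∀ s t : ℝ, MeasurableSet {ω | ε i ω = s ∧ ε j ω = t} := by
    intro s t
    exact ((hε.1 i) (measurableSet_singleton s)).inter ((hε.1 j) (measurableSet_singleton t))
  have hGge : 2⁻¹ ≤ ν G := by
    have hsub : {ω | ε i ω = 1 ∧ ε j ω = 1} ∪ {ω | ε i ω = -1 ∧ ε j ω = -1} ⊆ G := by
      rintro ω (⟨h1, h2⟩ | ⟨h1, h2⟩) <;> simp [hGdef, Set.mem_setOf_eq, h1, h2]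
    calc (2 : ℝ≥0∞)⁻¹ = 2⁻¹ ^ 2 + 2⁻¹ ^ 2 := by
          rw [← two_mul, pow_two, ← mul_assoc, ENNReal.mul_inv_cancel two_ne_zero ENNReal.ofNat_ne_top,
            one_mul]
      _ = ν ({ω | ε i ω = 1 ∧ ε j ω = 1} ∪ {ω | ε i ω = -1 ∧ ε j ω = -1}) := by
          rw [measure_union (by
            rw [Set.disjoint_left]; rintro ω ⟨h1, _⟩ ⟨h2, _⟩; rw [h1] at h2; norm_num at h2)
            (hmF _ _), hF 1 1 (Or.inl rfl) (Or.inl rfl), hF (-1) (-1) (Or.inr rfl) (Or.inr rfl)]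
      _ ≤ ν G := measure_mono hsub
  have hHge : 2⁻¹ ≤ ν H := by
    have hsub : {ω | ε i ω = 1 ∧ ε j ω = -1} ∪ {ω | ε i ω = -1 ∧ ε j ω = 1} ⊆ H := by
      rintro ω (⟨h1, h2⟩ | ⟨h1, h2⟩) <;> simp [hHdef, Set.mem_setOf_eq, h1, h2]
    calc (2 : ℝ≥0∞)⁻¹ = 2⁻¹ ^ 2 + 2⁻¹ ^ 2 := by
          rw [← two_mul, pow_two, ← mul_assoc, ENNReal.mul_inv_cancel two_ne_zero ENNReal.ofNat_ne_top,
            one_mul]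
      _ = ν ({ω | ε i ω = 1 ∧ ε j ω = -1} ∪ {ω | ε i ω = -1 ∧ ε j ω = 1}) := by
          rw [measure_union (by
            rw [Set.disjoint_left]; rintro ω ⟨h1, _⟩ ⟨h2, _⟩; rw [h1] at h2; norm_num at h2)
            (hmF _ _), hF 1 (-1) (Or.inl rfl) (Or.inr rfl), hF (-1) 1 (Or.inr rfl) (Or.inl rfl)]
      _ ≤ ν H := measure_mono hsub
  have hdisjGH : Disjoint G H := by
    rw [Set.disjoint_left]
    intro ω h1 h2
    rw [hGdef, Set.mem_setOf_eq] at h1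
    rw [hHdef, Set.mem_setOf_eq] at h2
    rw [h1] at h2; norm_num at h2
  have hsum_le : ν G + ν H ≤ 1 := by
    rw [← measure_union hdisjGH hmH]
    exact measure_mono (Set.subset_univ _) |>.trans (le_of_eq (measure_univ))
  have hG : ν G = 2⁻¹ := by
    refine le_antisymm ?_ hGge
    have : ν G + 2⁻¹ ≤ 2⁻¹ + 2⁻¹ := by
      calc ν G + 2⁻¹ ≤ ν G + ν H := add_le_add le_rfl hHge
        _ ≤ 1 := hsum_le
        _ = 2⁻¹ + 2⁻¹ := ENNReal.inv_two_add_inv_two.symm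
    exact (ENNReal.add_le_add_iff_right (ENNReal.inv_ne_top.mpr two_ne_zero)).mp this
  have hH : ν H = 2⁻¹ := by
    refine le_antisymm ?_ hHge
    have : ν H + 2⁻¹ ≤ 2⁻¹ + 2⁻¹ := by
      calc ν H + 2⁻¹ ≤ ν H + ν G := add_le_add le_rfl hGge
        _ = ν G + ν H := add_comm _ _
        _ ≤ 1 := hsum_le
        _ = 2⁻¹ + 2⁻¹ := ENNReal.inv_two_add_inv_two.symm
    exact (ENNReal.add_le_add_iff_right (ENNReal.inv_ne_top.mpr two_ne_zero)).mp this
  have hae : (fun ω => ε i ω * ε j ω)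
      =ᵐ[ν] (fun ω => G.indicator (fun _ => (1 : ℝ)) ω + H.indicator (fun _ => (-1 : ℝ)) ω) := by
    filter_upwards [ae_pm ν ε hε] with ω hω
    have hm : ε i ω * ε j ω = 1 ∨ ε i ω * ε j ω = -1 := by
      rcases hω i with h1 | h1 <;> rcases hω j with h2 | h2 <;> simp [h1, h2]
    rcases hm with hm | hm
    · have hωG : ω ∈ G := hm
      have hωH : ω ∉ H := fun hc => by
        rw [hHdef, Set.mem_setOf_eq] at hc; rw [hm] at hc; norm_num at hc
      rw [Set.indicator_of_mem hωG, Set.indicator_of_notMem hωH, hm]; ring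
    · have hωH : ω ∈ H := hm
      have hωG : ω ∉ G := fun hc => by
        rw [hGdef, Set.mem_setOf_eq] at hc; rw [hm] at hc; norm_num at hc
      rw [Set.indicator_of_notMem hωG, Set.indicator_of_mem hωH, hm]; ring
  rw [integral_congr_ae hae, integral_add ((integrable_const (1:ℝ)).indicator hmG)
    ((integrable_const (-1:ℝ)).indicator hmH), integral_indicator_const _ hmG,
    integral_indicator_const _ hmH, measureReal_def, measureReal_def, hG, hH]
  simp

lemma integral_eps_sq (ε : Fin N → Ω' → ℝ) (hε : IsKWiseRademacher ν 2 ε) (i : Fin N) :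
    ∫ ω, ε i ω * ε i ω ∂ν = 1 := by
  have hae : (fun ω => ε i ω * ε i ω) =ᵐ[ν] (fun _ => (1 : ℝ)) := by
    filter_upwards [ae_pm ν ε hε] with ω hω
    rcases hω i with h1 | h1 <;> rw [h1] <;> norm_num
  rw [integral_congr_ae hae, integral_const, measureReal_def, measure_univ]
  simp
end Upper

section Upper2
variable {Ω' : Type*} [MeasurableSpace Ω'] (ν : Measure Ω') [IsProbabilityMeasure ν] {N : ℕ}

lemma integrable_eps_mul (ε : Fin N → Ω' → ℝ) (hε : IsKWiseRademacher ν 2 ε) (c : ℝ)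
    (i j : Fin N) : Integrable (fun ω => c * (ε i ω * ε j ω)) ν := by
  refine Integrable.mono' (integrable_const |c|) ?_ ?_
  · exact (((hε.1 i).mul (hε.1 j)).const_mul c).aestronglyMeasurable
  · filter_upwards [ae_pm ν ε hε] with ω hω
    have h1 : |ε i ω| = 1 := by rcases hω i with h | h <;> rw [h] <;> norm_num
    have h2 : |ε j ω| = 1 := by rcases hω j with h | h <;> rw [h] <;> norm_num
    rw [Real.norm_eq_abs, abs_mul, abs_mul, h1, h2]
    simp

lemma integral_sq (ε : Fin N → Ω' → ℝ) (hε : IsKWiseRademacher ν 2 ε) (a : Fin N → ℝ)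
    (ha : ∑ i, (a i) ^ 2 = 1) : ∫ ω, (∑ i, a i * ε i ω) ^ 2 ∂ν = 1 := by
  classical
  have hexp : ∀ ω : Ω', (∑ i, a i * ε i ω) ^ 2
      = ∑ i, ∑ j, (a i * a j) * (ε i ω * ε j ω) := by
    intro ω
    rw [pow_two, Finset.sum_mul_sum]
    refine Finset.sum_congr rfl fun i _ => Finset.sum_congr rfl fun j _ => by ring
  simp_rw [hexp]
  rw [integral_finset_sum _ (fun i _ => integrable_finset_sum _
    (fun j _ => integrable_eps_mul ν ε hε _ i j))]
  have : ∀ i ∈ Finset.univ, (∫ ω, ∑ j, (a i * a j) * (ε i ω * ε j ω) ∂ν) = (a i) ^ 2 := by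
    intro i _
    rw [integral_finset_sum _ (fun j _ => integrable_eps_mul ν ε hε _ i j)]
    have : ∀ j ∈ Finset.univ, (∫ ω, (a i * a j) * (ε i ω * ε j ω) ∂ν)
        = if j = i then (a i) ^ 2 else 0 := by
      intro j _
      rw [MeasureTheory.integral_const_mul]
      by_cases hij : j = i
      · subst hij
        rw [integral_eps_sq ν ε hε j, if_pos rfl, mul_one, pow_two]
      · rw [integral_eps_mul ν ε hε (fun hc => hij hc.symm), if_neg hij, mul_zero]
    rw [Finset.sum_congr rfl this, Finset.sum_ite_eq' Finset.univ i (fun _ => (a i) ^ 2)]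
    simp
  rw [Finset.sum_congr rfl this, ha]

lemma upper_bound (ε : Fin N → Ω' → ℝ) (a : Fin N → ℝ) (hε : IsKWiseRademacher ν 2 ε)
    (ha : ∑ i, (a i) ^ 2 = 1) {p : ℝ} (hp : 2 ≤ p) :
    (∫ ω, |∑ i, a i * ε i ω| ^ p ∂ν) ^ (1 / p) ≤ (N : ℝ) ^ ((1 : ℝ) / 2 - 1 / p) := by
  classical
  have hp0 : (0 : ℝ) < p := lt_of_lt_of_le (by norm_num) hp
  set B : ℝ := (N : ℝ) ^ ((1 : ℝ) / 2) with hB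
  have hBnn : 0 ≤ B := Real.rpow_nonneg (Nat.cast_nonneg N) _
  have habs : ∀ᵐ ω ∂ν, |∑ i, a i * ε i ω| ≤ B := by
    filter_upwards [ae_pm ν ε hε] with ω hω
    have h1 : |∑ i, a i * ε i ω| ≤ ∑ i, |a i| := by
      refine (Finset.abs_sum_le_sum_abs _ _).trans (le_of_eq ?_)
      refine Finset.sum_congr rfl fun i _ => ?_
      rw [abs_mul]
      rcases hω i with h | h <;> rw [h] <;> norm_num
    have h2 : (∑ i, |a i|) ^ 2 ≤ (N : ℝ) := by
      have := Finset.sum_mul_sq_le_sq_mul_sq Finset.univ (fun _ => (1 : ℝ)) (fun i => |a i|)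
      simp only [one_mul, one_pow, Finset.sum_const, Finset.card_univ, Fintype.card_fin,
        nsmul_eq_mul, mul_one, sq_abs] at this
      calc (∑ i, |a i|) ^ 2 ≤ (N : ℝ) * ∑ i, (a i) ^ 2 := by
            have heq : ∀ i ∈ Finset.univ, |a i| ^ 2 = (a i) ^ 2 := fun i _ => sq_abs _
            calc (∑ i, |a i|) ^ 2 ≤ (N : ℝ) * ∑ i, |a i| ^ 2 := by
                  have h3 := Finset.sum_mul_sq_le_sq_mul_sq Finset.univ
                    (fun _ => (1 : ℝ)) (fun i => |a i|)
                  simpa [Finset.card_univ] using h3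
              _ = (N : ℝ) * ∑ i, (a i) ^ 2 := by rw [Finset.sum_congr rfl heq]
        _ = (N : ℝ) := by rw [ha, mul_one]
    have h3 : ∑ i, |a i| ≤ B := by
      rw [hB, ← Real.sqrt_eq_rpow]
      exact (Real.le_sqrt (Finset.sum_nonneg fun i _ => abs_nonneg _) (Nat.cast_nonneg N)).mpr h2
    exact h1.trans h3
  have hbound : ∫ ω, |∑ i, a i * ε i ω| ^ p ∂ν ≤ B ^ (p - 2) := by
    have hmono : ∀ᵐ ω ∂ν, |∑ i, a i * ε i ω| ^ p
        ≤ B ^ (p - 2) * (∑ i, a i * ε i ω) ^ 2 := by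
      filter_upwards [habs] with ω hω
      set x := |∑ i, a i * ε i ω| with hx
      have hxnn : 0 ≤ x := abs_nonneg _
      have hsq : (∑ i, a i * ε i ω) ^ 2 = x ^ 2 := (sq_abs _).symm
      rw [hsq]
      rcases eq_or_lt_of_le hxnn with h0 | h0
      · rw [← h0, Real.zero_rpow (ne_of_gt hp0)]
        positivity
      · have hsplit : x ^ p = x ^ (p - 2) * x ^ (2 : ℝ) := by
          rw [← Real.rpow_add h0]; ring_nf
        rw [hsplit, Real.rpow_two]
        have h4 : x ^ (p - 2) ≤ B ^ (p - 2) :=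
          Real.rpow_le_rpow hxnn hω (by linarith)
        exact mul_le_mul_of_nonneg_right h4 (by positivity)
    have hInt : Integrable (fun ω => B ^ (p - 2) * (∑ i, a i * ε i ω) ^ 2) ν := by
      have : (fun ω => B ^ (p - 2) * (∑ i, a i * ε i ω) ^ 2)
          = fun ω => ∑ i, ∑ j, (B ^ (p - 2) * (a i * a j)) * (ε i ω * ε j ω) := by
        funext ω
        rw [pow_two, Finset.sum_mul_sum, Finset.mul_sum]
        refine Finset.sum_congr rfl fun i _ => ?_
        rw [Finset.mul_sum]
        exact Finset.sum_congr rfl fun j _ => by ring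
      rw [this]
      exact integrable_finset_sum _ fun i _ => integrable_finset_sum _
        (fun j _ => integrable_eps_mul ν ε hε _ i j)
    calc ∫ ω, |∑ i, a i * ε i ω| ^ p ∂ν
        ≤ ∫ ω, B ^ (p - 2) * (∑ i, a i * ε i ω) ^ 2 ∂ν := by
          refine integral_mono_of_nonneg ?_ hInt hmono
          filter_upwards with ω
          positivity
      _ = B ^ (p - 2) * ∫ ω, (∑ i, a i * ε i ω) ^ 2 ∂ν := MeasureTheory.integral_const_mul _ _
      _ = B ^ (p - 2) := by rw [integral_sq ν ε hε a ha, mul_one]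
  have hnn : 0 ≤ ∫ ω, |∑ i, a i * ε i ω| ^ p ∂ν := by
    refine integral_nonneg fun ω => ?_
    positivity
  calc (∫ ω, |∑ i, a i * ε i ω| ^ p ∂ν) ^ (1 / p)
      ≤ (B ^ (p - 2)) ^ (1 / p) :=
        Real.rpow_le_rpow hnn hbound (by positivity)
    _ = (N : ℝ) ^ ((1 : ℝ) / 2 - 1 / p) := by
        rw [hB, ← Real.rpow_mul (Nat.cast_nonneg N), ← Real.rpow_mul (Nat.cast_nonneg N)]
        congr 1
        field_simp
end Upper2

lemma pow_mul_inv_pow (a b : ℕ) : (2 : ℝ≥0∞) ^ a * 2⁻¹ ^ (a + b) = 2⁻¹ ^ b := by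
  rw [pow_add, ← mul_assoc, ← mul_pow, ENNReal.mul_inv_cancel two_ne_zero ENNReal.ofNat_ne_top,
    one_pow, one_mul]

lemma measure_pattern_event (h : IsKWiseRademacher μ (n + 1) εbar)
    (hf : ∀ S ω, f S ω = εbar 0 ω * ∏ i ∈ S, εbar i.succ ω)
    (s : Finset (Fin (2 ^ n))) (e : Fin (2 ^ n) ≃ Finset (Fin n)) (σ : Fin (2 ^ n) → ℝ) :
    μ {ω | ∀ k ∈ s, f (e k) ω = σ k}
      = (Finset.univ.filter
          (fun τ : Fin (n + 1) → Bool => ∀ k ∈ s, par (Aset (e k)) τ = σ k)).card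
        * (2 : ℝ≥0∞)⁻¹ ^ (n + 1) := by
  classical
  refine measure_eq_count μ h ?_ _ ?_ ?_
  · have : {ω | ∀ k ∈ s, f (e k) ω = σ k} = ⋂ k ∈ s, (f (e k)) ⁻¹' {σ k} := by
      ext ω; simp
    rw [this]
    exact MeasurableSet.biInter s.countable_toSet
      (fun k _ => (measurable_f μ h hf (e k)) (measurableSet_singleton _))
  · intro τ hτ ω hω k hk
    rw [Finset.mem_filter] at hτ
    rw [f_on_Ev hf hω]
    exact hτ.2 k hk
  · intro τ hτ
    rw [Set.disjoint_left]
    intro ω hωE hωA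
    apply hτ
    rw [Finset.mem_filter]
    refine ⟨Finset.mem_univ _, fun k hk => ?_⟩
    rw [← f_on_Ev hf hωE]
    exact hωA k hk

lemma f_two_wise (h : IsKWiseRademacher μ (n + 1) εbar)
    (hf : ∀ S ω, f S ω = εbar 0 ω * ∏ i ∈ S, εbar i.succ ω)
    (e : Fin (2 ^ n) ≃ Finset (Fin n)) :
    IsKWiseRademacher μ 2 (fun k => f (e k)) := by
  classical
  refine ⟨fun k => measurable_f μ h hf (e k), ?_⟩
  intro s hs σ hσ
  rw [measure_pattern_event μ h hf s e σ]
  interval_cases hc : s.card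
  · rw [Finset.card_eq_zero] at hc
    subst hc
    simp only [Finset.notMem_empty, false_implies, implies_true, Finset.filter_true,
      Finset.card_univ, Fintype.card_fun, Fintype.card_bool, Fintype.card_fin, pow_zero]
    push_cast
    rw [← mul_pow, ENNReal.mul_inv_cancel two_ne_zero ENNReal.ofNat_ne_top, one_pow]
  · rw [Finset.card_eq_one] at hc
    obtain ⟨k, rfl⟩ := hc
    have hfilter : (Finset.univ.filter
        (fun τ : Fin (n + 1) → Bool => ∀ k' ∈ ({k} : Finset (Fin (2 ^ n))),
          par (Aset (e k')) τ = σ k')).card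
        = (Finset.univ.filter (fun τ : Fin (n + 1) → Bool => par (Aset (e k)) τ = σ k)).card := by
      congr 1
      refine Finset.filter_congr fun τ _ => ?_
      simp
    rw [hfilter]
    have hcard := card_par_eq (Aset_nonempty (e k)) (hσ k)
    have hc2 : (Finset.univ.filter
        (fun τ : Fin (n + 1) → Bool => par (Aset (e k)) τ = σ k)).card = 2 ^ n := by
      have h2 : 2 ^ (n + 1) = 2 * 2 ^ n := by ring
      omega
    rw [hc2]
    push_cast
    rw [show n + 1 = n + 1 from rfl, pow_mul_inv_pow n 1]
  · rw [Finset.card_eq_two] at hc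
    obtain ⟨k₁, k₂, hne, rfl⟩ := hc
    have hAB : Aset (e k₁) ≠ Aset (e k₂) := by
      intro hc
      exact hne (e.injective (Aset_inj hc))
    have hfilter : (Finset.univ.filter
        (fun τ : Fin (n + 1) → Bool => ∀ k' ∈ ({k₁, k₂} : Finset (Fin (2 ^ n))),
          par (Aset (e k')) τ = σ k')).card
        = (Finset.univ.filter (fun τ : Fin (n + 1) → Bool =>
            par (Aset (e k₁)) τ = σ k₁ ∧ par (Aset (e k₂)) τ = σ k₂)).card := by
      congr 1
      refine Finset.filter_congr fun τ _ => ?_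
      simp [Finset.forall_mem_insert]
    rw [hfilter]
    have hcard4 : 4 * (Finset.univ.filter (fun τ : Fin (n + 1) → Bool =>
        par (Aset (e k₁)) τ = σ k₁ ∧ par (Aset (e k₂)) τ = σ k₂)).card = 2 ^ (n + 1) := by
      by_cases hsub : Aset (e k₁) ⊆ Aset (e k₂)
      · have hsub2 : ¬ Aset (e k₂) ⊆ Aset (e k₁) := by
          intro hc
          exact hAB (Finset.Subset.antisymm hsub hc)
        obtain ⟨j, hjB, hjA⟩ := Finset.not_subset.mp hsub2
        exact card_par_pair hjB hjA (Aset_nonempty (e k₁)) (hσ k₂) (hσ k₁)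
      · obtain ⟨j, hjA, hjB⟩ := Finset.not_subset.mp hsub
        have := card_par_pair hjA hjB (Aset_nonempty (e k₂)) (hσ k₁) (hσ k₂)
        rw [← this]
        exact congrArg (fun t => 4 * t)
          (congrArg Finset.card (Finset.filter_congr fun τ _ => and_comm))
    rcases n with _ | m
    · exfalso
      apply hne
      have h1 := k₁.isLt
      have h2 := k₂.isLt
      norm_num at h1 h2
      exact Fin.ext (by omega)
    · have h4 : 2 ^ (m + 1 + 1) = 4 * 2 ^ m := by ring
      have hcval : (Finset.univ.filter (fun τ : Fin (m + 1 + 1) → Bool =>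
          par (Aset (e k₁)) τ = σ k₁ ∧ par (Aset (e k₂)) τ = σ k₂)).card = 2 ^ m := by
        omega
      rw [hcval]
      push_cast
      rw [show m + 1 + 1 = m + 2 from rfl, pow_mul_inv_pow m 2]

section Concrete
variable {m : ℕ}

def μc (m : ℕ) : Measure (Fin m → Bool) := (PMF.uniformOfFintype (Fin m → Bool)).toMeasure

instance : IsProbabilityMeasure (μc m) := PMF.toMeasure.isProbabilityMeasure _

def εc (m : ℕ) : Fin m → (Fin m → Bool) → ℝ := fun j ω => sgn (ω j)

lemma measurable_εc (j : Fin m) : Measurable (εc m j) := by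
  exact Measurable.comp (measurable_from_top) (measurable_pi_apply j)

lemma cylinder_card (m : ℕ) (s : Finset (Fin m)) (b : Fin m → Bool) :
    (Finset.univ.filter (fun ω : Fin m → Bool => ∀ i ∈ s, ω i = b i)).card
      = 2 ^ (m - s.card) := by
  classical
  rw [← Fintype.card_subtype]
  have e : {ω : Fin m → Bool // ∀ i ∈ s, ω i = b i} ≃ ({i : Fin m // i ∉ s} → Bool) :=
    { toFun := fun ω i => ω.1 i.1
      invFun := fun g => ⟨fun i => if h : i ∈ s then b i else g ⟨i, h⟩,
        fun i hi => dif_pos hi⟩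
      left_inv := fun ω => Subtype.ext (funext fun i => by
        by_cases h : i ∈ s
        · simp only [dif_pos h]
          exact (ω.2 i h).symm
        · simp only [dif_neg h])
      right_inv := fun g => funext fun i => by simp only [dif_neg i.2] }
  rw [Fintype.card_congr e, Fintype.card_fun, Fintype.card_bool]
  congr 1
  rw [Fintype.card_subtype_compl, Fintype.card_fin, Fintype.card_coe]

lemma μc_apply (P : (Fin m → Bool) → Prop) [DecidablePred P] :
    μc m {ω | P ω} = ((Finset.univ.filter P).card : ℝ≥0∞) * ((2 : ℝ≥0∞) ^ m)⁻¹ := by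
  rw [μc, PMF.toMeasure_apply_fintype]
  have hpt : ∀ ω : Fin m → Bool,
      Set.indicator {ω | P ω} (⇑(PMF.uniformOfFintype (Fin m → Bool))) ω
      = if P ω then ((2 : ℝ≥0∞) ^ m)⁻¹ else 0 := by
    intro ω
    by_cases hω : P ω <;> simp [hω, PMF.uniformOfFintype_apply, Set.indicator]
  rw [Finset.sum_congr rfl fun ω _ => hpt ω, ← Finset.sum_filter, Finset.sum_const,
    nsmul_eq_mul]

lemma εc_rademacher (m k : ℕ) : IsKWiseRademacher (μc m) k (εc m) := by
  classical
  refine ⟨measurable_εc, ?_⟩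
  intro s _ σ hσ
  set b : Fin m → Bool := fun i => decide (σ i = 1) with hb
  have hset : {ω : Fin m → Bool | ∀ i ∈ s, εc m i ω = σ i}
      = {ω : Fin m → Bool | ∀ i ∈ s, ω i = b i} := by
    ext ω
    simp only [Set.mem_setOf_eq]
    refine forall₂_congr fun i _ => ?_
    rcases hσ i with hv | hv
    · have hbi : b i = true := by rw [hb]; simp [hv]
      rw [hv, hbi]
      show sgn (ω i) = 1 ↔ ω i = true
      exact sgn_eq_one_iff
    · have hbi : b i = false := by
        rw [hb]
        exact decide_eq_false (by norm_num [hv])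
      rw [hv, hbi]
      show sgn (ω i) = -1 ↔ ω i = false
      exact sgn_eq_neg_one_iff
  rw [hset, μc_apply (fun ω => ∀ i ∈ s, ω i = b i), cylinder_card m s b]
  have hk : s.card ≤ m := by
    have := Finset.card_le_univ s
    simpa using this
  have key := pow_mul_inv_pow (m - s.card) s.card
  rw [Nat.sub_add_cancel hk] at key
  rw [← ENNReal.inv_pow] at key
  push_cast
  exact key
end Concrete
end PFM2
end Aux

open PFM PFM2

open scoped Classical in
/-- for the family `ε_S = ε̄₀ ∏_{i∈S} ε̄ᵢ` (with `N = 2^n`): almost surely all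
`ε_S` equal `1`, or all equal `−1`, or exactly half equal `1`; the all-`1` and all-`−1` events
each have probability `1/2^{n+1} = 1/(2N)`; consequently `E|∑_S ε_S|^p = N^{p-1}` for `p ≥ 2`
and `C(N,p,2) = N^{1/2-1/p}` for `N = 2^n`. -/
theorem product_family_moments {Ω : Type*} [MeasurableSpace Ω]
    (μ : Measure Ω) [IsProbabilityMeasure μ] {n : ℕ}
    (εbar : Fin (n + 1) → Ω → ℝ) (h : IsKWiseRademacher μ (n + 1) εbar)
    (f : Finset (Fin n) → Ω → ℝ)
    (hf : ∀ S ω, f S ω = εbar 0 ω * ∏ i ∈ S, εbar i.succ ω) :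
    (∀ᵐ ω ∂μ, (∀ S : Finset (Fin n), f S ω = 1) ∨ (∀ S : Finset (Fin n), f S ω = -1) ∨
      2 * (Finset.univ.filter (fun S : Finset (Fin n) => f S ω = 1)).card = 2 ^ n) ∧
    μ {ω | ∀ S : Finset (Fin n), f S ω = 1} = (2 : ℝ≥0∞)⁻¹ ^ (n + 1) ∧
    μ {ω | ∀ S : Finset (Fin n), f S ω = -1} = (2 : ℝ≥0∞)⁻¹ ^ (n + 1) ∧
    (∀ p : ℝ, 2 ≤ p →
      (∫ ω, |∑ S : Finset (Fin n), f S ω| ^ p ∂μ) = ((2 ^ n : ℕ) : ℝ) ^ (p - 1)) ∧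
    (∀ p : ℝ, 2 ≤ p →
      CNpk (2 ^ n) p 2 = ((2 ^ n : ℕ) : ℝ) ^ ((1 : ℝ) / 2 - 1 / p)) := by
  refine ⟨?_, measure_A1 μ h hf, measure_A2 μ h hf, fun p hp =>
    integral_abs_sum μ h hf (by linarith : (0:ℝ) < p), ?_⟩
  · filter_upwards [ae_exists_Ev μ h] with ω hω
    obtain ⟨σ, hσ⟩ := hω
    exact trich hf hσ
  · intro p hp
    have hp0 : (0 : ℝ) < p := by linarith
    set X : ℝ := ((2 ^ n : ℕ) : ℝ) with hXdef
    have hX : (0 : ℝ) < X := by rw [hXdef]; positivity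
    set e : Fin (2 ^ n) ≃ Finset (Fin n) :=
      (Fintype.equivFinOfCardEq (by simp : Fintype.card (Finset (Fin n)) = 2 ^ n)).symm with he
    -- the concrete construction
    set f0 : Finset (Fin n) → (Fin (n + 1) → Bool) → ℝ :=
      fun S ω => εc (n + 1) 0 ω * ∏ i ∈ S, εc (n + 1) i.succ ω with hf0def
    have hf0 : ∀ S ω, f0 S ω = εc (n + 1) 0 ω * ∏ i ∈ S, εc (n + 1) i.succ ω :=
      fun S ω => rfl
    have h0 : IsKWiseRademacher (μc (n + 1)) (n + 1) (εc (n + 1)) :=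
      εc_rademacher (n + 1) (n + 1)
    have hε0 : IsKWiseRademacher (μc (n + 1)) 2 (fun k => f0 (e k)) :=
      f_two_wise (μc (n + 1)) h0 hf0 e
    set a0 : Fin (2 ^ n) → ℝ := fun _ => X ^ (-(1 / 2) : ℝ) with ha0def
    have ha0 : ∑ k, (a0 k) ^ 2 = 1 := by
      have hsq : ∀ k : Fin (2 ^ n), (a0 k) ^ 2 = X ^ (-1 : ℝ) := by
        intro k
        show (X ^ (-(1 / 2) : ℝ)) ^ 2 = X ^ (-1 : ℝ)
        rw [pow_two, ← Real.rpow_add hX]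
        norm_num
      rw [Finset.sum_congr rfl fun k _ => hsq k, Finset.sum_const, Finset.card_univ,
        Fintype.card_fin, nsmul_eq_mul, Real.rpow_neg_one, hXdef]
      push_cast
      rw [mul_inv_cancel₀ (by positivity)]
    have hval : (∫ ω, |∑ k, a0 k * (fun k => f0 (e k)) k ω| ^ p ∂(μc (n + 1))) ^ ((1:ℝ) / p)
        = X ^ ((1 : ℝ) / 2 - 1 / p) := by
      have hsum : ∀ ω, ∑ k, a0 k * f0 (e k) ω
          = X ^ (-(1 / 2) : ℝ) * ∑ S : Finset (Fin n), f0 S ω := by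
        intro ω
        rw [← Finset.mul_sum]
        congr 1
        exact Equiv.sum_comp e (fun S => f0 S ω)
      have hcnn : (0 : ℝ) ≤ X ^ (-(1 / 2) : ℝ) := Real.rpow_nonneg hX.le _
      have hintegrand : ∀ ω, |∑ k, a0 k * f0 (e k) ω| ^ p
          = (X ^ (-(1 / 2) : ℝ)) ^ p * |∑ S : Finset (Fin n), f0 S ω| ^ p := by
        intro ω
        rw [hsum ω, abs_mul, abs_of_nonneg hcnn,
          Real.mul_rpow hcnn (abs_nonneg _)]
      simp only [hintegrand]
      rw [MeasureTheory.integral_const_mul, integral_abs_sum (μc (n + 1)) h0 hf0 hp0]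
      show ((X ^ (-(1 / 2) : ℝ)) ^ p * X ^ (p - 1)) ^ ((1:ℝ) / p) = X ^ ((1 : ℝ) / 2 - 1 / p)
      rw [← Real.rpow_mul hX.le, ← Real.rpow_add hX, ← Real.rpow_mul hX.le]
      congr 1
      field_simp
      ring
    have hmem : X ^ ((1 : ℝ) / 2 - 1 / p) ∈ {x : ℝ |
        ∃ (Ω' : Type) (_ : MeasurableSpace Ω') (ν : Measure Ω'),
        IsProbabilityMeasure ν ∧ ∃ (ε : Fin (2 ^ n) → Ω' → ℝ) (a : Fin (2 ^ n) → ℝ),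
          IsKWiseRademacher ν 2 ε ∧ (∑ i, (a i) ^ 2 = 1) ∧
          x = (∫ ω, |∑ i, a i * ε i ω| ^ p ∂ν) ^ (1 / p)} :=
      ⟨Fin (n + 1) → Bool, inferInstance, μc (n + 1), inferInstance,
        (fun k => f0 (e k)), a0, hε0, ha0, hval.symm⟩
    have hub : ∀ x ∈ {x : ℝ |
        ∃ (Ω' : Type) (_ : MeasurableSpace Ω') (ν : Measure Ω'),
        IsProbabilityMeasure ν ∧ ∃ (ε : Fin (2 ^ n) → Ω' → ℝ) (a : Fin (2 ^ n) → ℝ),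
          IsKWiseRademacher ν 2 ε ∧ (∑ i, (a i) ^ 2 = 1) ∧
          x = (∫ ω, |∑ i, a i * ε i ω| ^ p ∂ν) ^ (1 / p)},
        x ≤ X ^ ((1 : ℝ) / 2 - 1 / p) := by
      rintro x ⟨Ω', mΩ', ν, hν, ε, a, hε, ha, rfl⟩
      exact upper_bound ν ε a hε ha hp
    show sSup {x : ℝ |
        ∃ (Ω' : Type) (_ : MeasurableSpace Ω') (ν : Measure Ω'),
        IsProbabilityMeasure ν ∧ ∃ (ε : Fin (2 ^ n) → Ω' → ℝ) (a : Fin (2 ^ n) → ℝ),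
          IsKWiseRademacher ν 2 ε ∧ (∑ i, (a i) ^ 2 = 1) ∧
          x = (∫ ω, |∑ i, a i * ε i ω| ^ p ∂ν) ^ (1 / p)} = X ^ ((1 : ℝ) / 2 - 1 / p)
    exact le_antisymm (csSup_le ⟨_, hmem⟩ hub)
      (le_csSup ⟨X ^ ((1 : ℝ) / 2 - 1 / p), fun x hx => hub x hx⟩ hmem)
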